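/- arXiv:1004.0056 — 9 statements merged into one kernel-verified Lean document; each statement's English description precedes it below -/
import Mathlib

section
/- Let (X,◁) be a stratified poset, i.e., ◁ is a strict partial order such that the incomparability relation ≃ (defined by α ≃ β iff ¬(α ◁ β) and ¬(β ◁ α)) is an equivalence relation. Define ◁⌢ by α ◁⌢ β iff α ◁ β or (α ≃ β and α ≠ β). Then (X, ◁, ◁⌢) is a stratified order structure. -/
/-- A stratified poset `(X,◁)` yields a stratified order structure `(X, ◁, ◁⌢)`. -/
theorem stratified_order_gives_sos {X : Type*} (lt : X → X → Prop)
    (hirr : ∀ a, ¬ lt a a)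
    (htrans : ∀ a b c, lt a b → lt b c → lt a c)
    (hequiv : Equivalence (fun a b => ¬ lt a b ∧ ¬ lt b a)) :
    -- define ◁⌢ : α ◁⌢ β iff α ◁ β or (α ≃ β and α ≠ β)
    (let wk : X → X → Prop := fun a b => lt a b ∨ ((¬ lt a b ∧ ¬ lt b a) ∧ a ≠ b)
     (∀ a, ¬ wk a a) ∧
     (∀ a b, lt a b → wk a b) ∧
     (∀ a b c, wk a b → wk b c → a ≠ c → wk a c) ∧
     (∀ a b c, (wk a b ∧ lt b c) ∨ (lt a b ∧ wk b c) → lt a c)) := by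
  intro wk
  have key : ∀ a b c, lt a b → (¬ lt b c ∧ ¬ lt c b) → lt a c := by
    intro a b c hab ⟨hbc, hcb⟩
    by_contra hac
    rcases Classical.em (lt c a) with h | h
    · exact hcb (htrans c a b h hab)
    · exact (hequiv.trans (hequiv.trans ⟨hac, h⟩ (hequiv.symm ⟨hbc, hcb⟩)) (hequiv.refl b)).1 hab
  have key' : ∀ a b c, (¬ lt a b ∧ ¬ lt b a) → lt b c → lt a c := by
    intro a b c ⟨hab, hba⟩ hbc
    by_contra hac
    rcases Classical.em (lt c a) with h | h
    · exact hba (htrans b c a hbc h)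
    · exact (hequiv.trans (hequiv.symm ⟨hac, h⟩) ⟨hab, hba⟩).2 hbc
  refine ⟨fun a h => ?_, fun a b h => Or.inl h, fun a b c hab hbc hne => ?_, fun a b c h => ?_⟩
  · rcases h with h | ⟨_, h⟩
    · exact hirr a h
    · exact h rfl
  · rcases hab with hab | ⟨hab, _⟩ <;> rcases hbc with hbc | ⟨hbc, _⟩
    · exact Or.inl (htrans a b c hab hbc)
    · exact Or.inl (key a b c hab hbc)
    · exact Or.inl (key' a b c hab hbc)
    · exact Or.inr ⟨hequiv.trans hab hbc, hne⟩
  · rcases h with ⟨hab, hbc⟩ | ⟨hab, hbc⟩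
    · rcases hab with hab | ⟨hab, _⟩
      · exact htrans a b c hab hbc
      · exact key' a b c hab hbc
    · rcases hbc with hbc | ⟨hbc, _⟩
      · exact htrans a b c hab hbc
      · exact key a b c hab hbc
end

section
/- Let (X,≺,⊏) be a stratified order structure and ≡_⊏ the equivalence relation defined by α ≡_⊏ β iff α = β or (α ⊏ β ∧ β ⊏ α). Define relations on the quotient X/≡_⊏ by [α] ≺̂ [β] iff (∃ a ∈ [α], b ∈ [β], a ≺ b) and [α] ⊏̂ [β] iff (∃ a ∈ [α], b ∈ [β], a ⊏ b). Then for all α, β ∈ X: α ≺ β iff [α] ≺̂ [β]. -/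
/-- `α ≺ β` iff `[α] ≺̂ [β]` in the quotient by the ⊏-cycle equivalence, where
`[α] ≺̂ [β]` holds iff some representatives of the classes are ≺-related. -/
theorem sos_quotient_prec_iff {X : Type*} (prec wk : X → X → Prop)
    (hS1 : ∀ a, ¬ wk a a)
    (hS2 : ∀ a b, prec a b → wk a b)
    (hS3 : ∀ a b c, wk a b → wk b c → a ≠ c → wk a c)
    (hS4 : ∀ a b c, (wk a b ∧ prec b c) ∨ (prec a b ∧ wk b c) → prec a c) :
    (let E : X → X → Prop := fun a b => a = b ∨ (wk a b ∧ wk b a)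
     ∀ α β, prec α β ↔ ∃ a b, E α a ∧ E β b ∧ prec a b) := by
  intro E α β
  constructor
  · intro h
    exact ⟨α, β, Or.inl rfl, Or.inl rfl, h⟩
  · rintro ⟨a, b, hαa, hβb, hab⟩
    have hαb : prec α b := by
      rcases hαa with rfl | ⟨h1, h2⟩
      · exact hab
      · exact hS4 α a b (Or.inl ⟨h1, hab⟩)
    rcases hβb with rfl | ⟨h1, h2⟩
    · exact hαb
    · exact hS4 α b β (Or.inr ⟨hαb, h2⟩)
end

section
/- Let (X,≺,⊏) be a stratified order structure and ≡_⊏ the ⊏-cycle equivalence (α ≡_⊏ β iff α = β or α ⊏ β ⊏ α). Define [α] ⊏̂ [β] iff some a ∈ [α] and b ∈ [β] satisfy a ⊏ b. Then for all α, β ∈ X: α ⊏ β iff ([α] ⊏̂ [β]) or (α ≠ β and [α] = [β]). -/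
/-- `α ⊏ β` iff `[α] ⊏̂ [β]` or (`α ≠ β` and `[α] = [β]`), for the quotient by the
⊏-cycle equivalence. -/
theorem sos_quotient_wk_iff {X : Type*} (prec wk : X → X → Prop)
    (hS1 : ∀ a, ¬ wk a a)
    (hS2 : ∀ a b, prec a b → wk a b)
    (hS3 : ∀ a b c, wk a b → wk b c → a ≠ c → wk a c)
    (hS4 : ∀ a b c, (wk a b ∧ prec b c) ∨ (prec a b ∧ wk b c) → prec a c) :
    (let E : X → X → Prop := fun a b => a = b ∨ (wk a b ∧ wk b a)
     ∀ α β, wk α β ↔ ((∃ a b, E α a ∧ E β b ∧ wk a b) ∧ ¬ E α β) ∨ (α ≠ β ∧ E α β)) := by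
  intro E α β
  constructor
  · intro h
    by_cases hE : E α β
    · right
      refine ⟨?_, hE⟩
      rintro rfl
      exact hS1 α h
    · left
      exact ⟨⟨α, β, Or.inl rfl, Or.inl rfl, h⟩, hE⟩
  · rintro (⟨⟨a, b, hEa, hEb, hab⟩, hnE⟩ | ⟨hne, hEab⟩)
    · have hne : α ≠ β := fun h => hnE (Or.inl h)
      -- get wk α b
      have hαb : α = b ∨ wk α b := by
        rcases hEa with rfl | ⟨h1, h2⟩
        · exact Or.inr hab
        · by_cases hab' : α = b
          · exact Or.inl hab'
          · exact Or.inr (hS3 _ _ _ h1 hab hab')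
      rcases hEb with rfl | ⟨h3, h4⟩
      · rcases hαb with rfl | h
        · exact absurd rfl hne
        · exact h
      · rcases hαb with rfl | h
        · exact h4
        · exact hS3 _ _ _ h h4 hne
    · rcases hEab with rfl | ⟨h1, _⟩
      · exact absurd rfl hne
      · exact h1
end

section
/- Let (X,≺,⊏) be a stratified order structure, ≡_⊏ its ⊏-cycle equivalence, and ≺̂, ⊏̂ the induced relations on the quotient X/≡_⊏ (via existence of related representatives). Then (X/≡_⊏, ≺̂, ⊏̂) is again a stratified order structure. -/
/-- The quotient of a stratified order structure by the ⊏-cycle equivalence is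
again a stratified order structure (axioms stated on representatives; equality of
classes `[α] = [γ]` is `E α γ`). -/
theorem sos_quotient_is_sos {X : Type*} (prec wk : X → X → Prop)
    (hS1 : ∀ a, ¬ wk a a)
    (hS2 : ∀ a b, prec a b → wk a b)
    (hS3 : ∀ a b c, wk a b → wk b c → a ≠ c → wk a c)
    (hS4 : ∀ a b c, (wk a b ∧ prec b c) ∨ (prec a b ∧ wk b c) → prec a c) :
    (let E : X → X → Prop := fun a b => a = b ∨ (wk a b ∧ wk b a)
     let hprec : X → X → Prop := fun α β => ∃ a b, E α a ∧ E β b ∧ prec a b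
     let hwk : X → X → Prop := fun α β => (∃ a b, E α a ∧ E β b ∧ wk a b) ∧ ¬ E α β
     (∀ α, ¬ hwk α α) ∧
     (∀ α β, hprec α β → hwk α β) ∧
     (∀ α β γ, hwk α β → hwk β γ → ¬ E α γ → hwk α γ) ∧
     (∀ α β γ, (hwk α β ∧ hprec β γ) ∨ (hprec α β ∧ hwk β γ) → hprec α γ)) := by
  intro E hprec hwk
  have Esymm : ∀ a b, E a b → E b a := by
    rintro a b (rfl | ⟨h1, h2⟩)
    · exact Or.inl rfl
    · exact Or.inr ⟨h2, h1⟩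
  have key : ∀ α β a b, E α a → E β b → wk a b → ¬ E α β → wk α β := by
    intro α β a b hEa hEb hw hne
    have hab : wk α b := by
      rcases hEa with rfl | ⟨h1, h2⟩
      · exact hw
      · by_cases h : α = b
        · subst h
          exact absurd (Esymm _ _ hEb) hne
        · exact hS3 _ _ _ h1 hw h
    rcases hEb with rfl | ⟨h3, h4⟩
    · exact hab
    · by_cases h : α = β
      · exact absurd (Or.inl h) hne
      · exact hS3 _ _ _ hab h4 h
  have keyp : ∀ α β a b, E α a → E β b → prec a b → prec α β := by
    intro α β a b hEa hEb hp
    have h1 : prec α b := by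
      rcases hEa with rfl | ⟨h1, h2⟩
      · exact hp
      · exact hS4 _ _ _ (Or.inl ⟨h1, hp⟩)
    rcases hEb with rfl | ⟨h3, h4⟩
    · exact h1
    · exact hS4 _ _ _ (Or.inr ⟨h1, h4⟩)
  refine ⟨?_, ?_, ?_, ?_⟩
  · rintro α ⟨_, hne⟩
    exact hne (Or.inl rfl)
  · rintro α β ⟨a, b, hEa, hEb, hp⟩
    have hp' : prec α β := keyp α β a b hEa hEb hp
    refine ⟨⟨α, β, Or.inl rfl, Or.inl rfl, hS2 _ _ hp'⟩, ?_⟩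
    rintro (rfl | ⟨h1, h2⟩)
    · exact hS1 α (hS2 _ _ hp')
    · exact hS1 α (hS2 _ _ (hS4 _ _ _ (Or.inr ⟨hp', h2⟩)))
  · rintro α β γ ⟨⟨a, b, hEa, hEb, hw1⟩, hne1⟩ ⟨⟨c, d, hEc, hEd, hw2⟩, hne2⟩ hne3
    have w1 := key α β a b hEa hEb hw1 hne1
    have w2 := key β γ c d hEc hEd hw2 hne2
    by_cases h : α = γ
    · exact absurd (Or.inl h) hne3
    · exact ⟨⟨α, γ, Or.inl rfl, Or.inl rfl, hS3 _ _ _ w1 w2 h⟩, hne3⟩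
  · rintro α β γ (⟨⟨⟨a, b, hEa, hEb, hw1⟩, hne1⟩, ⟨c, d, hEc, hEd, hp⟩⟩ |
      ⟨⟨c, d, hEc, hEd, hp⟩, ⟨⟨a, b, hEa, hEb, hw1⟩, hne1⟩⟩)
    · have w := key α β a b hEa hEb hw1 hne1
      have p := keyp β γ c d hEc hEd hp
      exact ⟨α, γ, Or.inl rfl, Or.inl rfl, hS4 _ _ _ (Or.inl ⟨w, p⟩)⟩
    · have p := keyp α β c d hEc hEd hp
      have w := key β γ a b hEa hEb hw1 hne1
      exact ⟨α, γ, Or.inl rfl, Or.inl rfl, hS4 _ _ _ (Or.inr ⟨p, w⟩)⟩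
end

section
/- Let R₁, R₂ be binary relations on X and let S◊ = (X, P, Q) with P := (R₁∪R₂)* ∘ R₁ ∘ (R₁∪R₂)* and Q := (R₁∪R₂)* \ id. Then applying the ◊-closure operation to S◊ again yields S◊; i.e., (P∪Q)* ∘ P ∘ (P∪Q)* = P and (P∪Q)* \ id = Q (the ◊-closure is idempotent). -/
/-- The ◊-closure is idempotent. -/
theorem diamond_closure_idem {X : Type*} (R1 R2 : X → X → Prop) :
    (let U : X → X → Prop := fun a b => R1 a b ∨ R2 a b
     let P : X → X → Prop := Relation.Comp (Relation.Comp (Relation.ReflTransGen U) R1) (Relation.ReflTransGen U)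
     let Q : X → X → Prop := fun a b => Relation.ReflTransGen U a b ∧ a ≠ b
     let U' : X → X → Prop := fun a b => P a b ∨ Q a b
     let P' : X → X → Prop := Relation.Comp (Relation.Comp (Relation.ReflTransGen U') P) (Relation.ReflTransGen U')
     let Q' : X → X → Prop := fun a b => Relation.ReflTransGen U' a b ∧ a ≠ b
     (∀ a b, P' a b ↔ P a b) ∧ (∀ a b, Q' a b ↔ Q a b)) := by
  intro U P Q U' P' Q'
  have hPU : ∀ a b, P a b → Relation.ReflTransGen U a b := by
    rintro a b ⟨c, ⟨d, had, hdc⟩, hcb⟩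
    exact ((had.trans (Relation.ReflTransGen.single (Or.inl hdc))).trans hcb)
  have hU' : ∀ a b, Relation.ReflTransGen U' a b → Relation.ReflTransGen U a b := by
    intro a b h
    induction h with
    | refl => exact Relation.ReflTransGen.refl
    | tail _ hcd ih =>
        rcases hcd with hp | hq
        · exact ih.trans (hPU _ _ hp)
        · exact ih.trans hq.1
  have hAbs : ∀ a b, P' a b → P a b := by
    rintro a b ⟨c, ⟨d, had, ⟨e, ⟨f, hdf, hfe⟩, hec⟩⟩, hcb⟩
    exact ⟨e, ⟨f, (hU' a d had).trans hdf, hfe⟩, hec.trans (hU' c b hcb)⟩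
  constructor
  · intro a b
    constructor
    · exact hAbs a b
    · intro hp
      exact ⟨b, ⟨a, Relation.ReflTransGen.refl, hp⟩, Relation.ReflTransGen.refl⟩
  · intro a b
    constructor
    · rintro ⟨h, hne⟩; exact ⟨hU' a b h, hne⟩
    · rintro ⟨h, hne⟩
      refine ⟨Relation.ReflTransGen.single (Or.inr ⟨h, hne⟩), hne⟩
end

section
/- Let R₁, R₂ be binary relations on X. The ◊-closure (X, (R₁∪R₂)*∘R₁∘(R₁∪R₂)*, (R₁∪R₂)* \ id) is a stratified order structure if and only if the relation (R₁∪R₂)* ∘ R₁ ∘ (R₁∪R₂)* is irreflexive. -/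
/-- The ◊-closure of `(X,R₁,R₂)` is a stratified order structure iff
`(R₁∪R₂)* ∘ R₁ ∘ (R₁∪R₂)*` is irreflexive. -/
theorem diamond_closure_sos_iff {X : Type*} (R1 R2 : X → X → Prop) :
    (let U : X → X → Prop := fun a b => R1 a b ∨ R2 a b
     let P : X → X → Prop := Relation.Comp (Relation.Comp (Relation.ReflTransGen U) R1) (Relation.ReflTransGen U)
     let Q : X → X → Prop := fun a b => Relation.ReflTransGen U a b ∧ a ≠ b
     ((∀ a, ¬ Q a a) ∧
      (∀ a b, P a b → Q a b) ∧
      (∀ a b c, Q a b → Q b c → a ≠ c → Q a c) ∧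
      (∀ a b c, (Q a b ∧ P b c) ∨ (P a b ∧ Q b c) → P a c))
     ↔ (∀ a, ¬ P a a)) := by
  intro U P Q
  constructor
  · rintro ⟨h1, h2, h3, h4⟩ a hPa
    exact (h2 a a hPa).2 rfl
  · intro hirr
    refine ⟨fun a h => h.2 rfl, ?_, ?_, ?_⟩
    · rintro a b ⟨z, ⟨w, haw, hwz⟩, hzb⟩
      refine ⟨(haw.tail (Or.inl hwz)).trans hzb, ?_⟩
      rintro rfl
      exact hirr a ⟨z, ⟨w, haw, hwz⟩, hzb⟩
    · rintro a b c ⟨hab, _⟩ ⟨hbc, _⟩ hac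
      exact ⟨hab.trans hbc, hac⟩
    · rintro a b c (⟨⟨hab, _⟩, z, ⟨w, hbw, hwz⟩, hzc⟩ | ⟨⟨z, ⟨w, haw, hwz⟩, hzb⟩, hbc, _⟩)
      · exact ⟨z, ⟨w, hab.trans hbw, hwz⟩, hzc⟩
      · exact ⟨z, ⟨w, haw, hwz⟩, hzb.trans hbc⟩
end

section
/- If (X,≺,⊏) is a stratified order structure, then it equals its own ◊-closure: (X,≺,⊏) = (X, (≺∪⊏)*∘≺∘(≺∪⊏)*, (≺∪⊏)* \ id). -/
/-- A stratified order structure is a fixed point of the ◊-closure. -/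
theorem sos_diamond_fixed {X : Type*} (prec wk : X → X → Prop)
    (hS1 : ∀ a, ¬ wk a a)
    (hS2 : ∀ a b, prec a b → wk a b)
    (hS3 : ∀ a b c, wk a b → wk b c → a ≠ c → wk a c)
    (hS4 : ∀ a b c, (wk a b ∧ prec b c) ∨ (prec a b ∧ wk b c) → prec a c) :
    (let U : X → X → Prop := fun a b => prec a b ∨ wk a b
     let P : X → X → Prop := Relation.Comp (Relation.Comp (Relation.ReflTransGen U) prec) (Relation.ReflTransGen U)
     let Q : X → X → Prop := fun a b => Relation.ReflTransGen U a b ∧ a ≠ b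
     (∀ a b, P a b ↔ prec a b) ∧ (∀ a b, Q a b ↔ wk a b)) := by
  intro U P Q
  have hU : ∀ a b, U a b → wk a b := fun a b h => h.elim (hS2 a b) id
  have key : ∀ a b, Relation.ReflTransGen U a b → a = b ∨ wk a b := by
    intro a b h
    induction h with
    | refl => exact Or.inl rfl
    | tail hbc hcd ih =>
      rename_i c d
      rcases ih with rfl | hw
      · exact Or.inr (hU _ _ hcd)
      · by_cases hac : a = d
        · exact Or.inl hac
        · exact Or.inr (hS3 _ _ _ hw (hU _ _ hcd) hac)
  constructor
  · intro a b
    constructor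
    · rintro ⟨z, ⟨y, hay, hyz⟩, hzb⟩
      have h1 : prec a z := by
        rcases key _ _ hay with rfl | hw
        · exact hyz
        · exact hS4 _ _ _ (Or.inl ⟨hw, hyz⟩)
      rcases key _ _ hzb with rfl | hw
      · exact h1
      · exact hS4 _ _ _ (Or.inr ⟨h1, hw⟩)
    · intro h
      exact ⟨b, ⟨a, Relation.ReflTransGen.refl, h⟩, Relation.ReflTransGen.refl⟩
  · intro a b
    constructor
    · rintro ⟨h, hne⟩
      rcases key _ _ h with rfl | hw
      · exact absurd rfl hne
      · exact hw
    · intro h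
      exact ⟨Relation.ReflTransGen.single (Or.inr h), fun he => hS1 a (he ▸ h)⟩
end

section
/- Let S = (X,≺,⊏) be a stratified order structure and let R₁ ⊆ ≺ and R₂ ⊆ ⊏. Then the ◊-closure (X, (R₁∪R₂)*∘R₁∘(R₁∪R₂)*, (R₁∪R₂)* \ id) is a stratified order structure and is contained (componentwise) in S. -/
/-- If `S=(X,≺,⊏)` is a stratified order structure and `R₁ ⊆ ≺`, `R₂ ⊆ ⊏`, then the
◊-closure of `(X,R₁,R₂)` is a stratified order structure contained in `S`. -/
theorem diamond_closure_mono_sos {X : Type*} (prec wk R1 R2 : X → X → Prop)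
    (hS1 : ∀ a, ¬ wk a a)
    (hS2 : ∀ a b, prec a b → wk a b)
    (hS3 : ∀ a b c, wk a b → wk b c → a ≠ c → wk a c)
    (hS4 : ∀ a b c, (wk a b ∧ prec b c) ∨ (prec a b ∧ wk b c) → prec a c)
    (h1 : ∀ a b, R1 a b → prec a b)
    (h2 : ∀ a b, R2 a b → wk a b) :
    (let U : X → X → Prop := fun a b => R1 a b ∨ R2 a b
     let P : X → X → Prop := Relation.Comp (Relation.Comp (Relation.ReflTransGen U) R1) (Relation.ReflTransGen U)
     let Q : X → X → Prop := fun a b => Relation.ReflTransGen U a b ∧ a ≠ b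
     ((∀ a, ¬ Q a a) ∧
      (∀ a b, P a b → Q a b) ∧
      (∀ a b c, Q a b → Q b c → a ≠ c → Q a c) ∧
      (∀ a b c, (Q a b ∧ P b c) ∨ (P a b ∧ Q b c) → P a c)) ∧
     (∀ a b, P a b → prec a b) ∧ (∀ a b, Q a b → wk a b)) := by
  intro U P Q
  have hUwk : ∀ a b, U a b → wk a b := by
    rintro a b (h | h)
    · exact hS2 a b (h1 a b h)
    · exact h2 a b h
  -- reflexive transitive closure of U gives equality or wk
  have hL : ∀ a b, Relation.ReflTransGen U a b → a = b ∨ wk a b := by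
    intro a b h
    induction h with
    | refl => exact Or.inl rfl
    | @tail b' c hab hbc ih =>
      rcases ih with rfl | hw
      · exact Or.inr (hUwk _ _ hbc)
      · by_cases hac : a = c
        · exact Or.inl hac
        · exact Or.inr (hS3 _ _ _ hw (hUwk _ _ hbc) hac)
  have hPprec : ∀ a b, P a b → prec a b := by
    rintro a b ⟨y, ⟨x, hax, hxy⟩, hyb⟩
    have p1 : prec a y := by
      rcases hL a x hax with rfl | hw
      · exact h1 _ _ hxy
      · exact hS4 _ _ _ (Or.inl ⟨hw, h1 _ _ hxy⟩)
    rcases hL y b hyb with rfl | hw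
    · exact p1
    · exact hS4 _ _ _ (Or.inr ⟨p1, hw⟩)
  have hPrtg : ∀ a b, P a b → Relation.ReflTransGen U a b := by
    rintro a b ⟨y, ⟨x, hax, hxy⟩, hyb⟩
    exact hax.trans (((Relation.ReflTransGen.single (show U x y from Or.inl hxy))).trans hyb)
  refine ⟨⟨?_, ?_, ?_, ?_⟩, hPprec, ?_⟩
  · rintro a ⟨_, hne⟩; exact hne rfl
  · intro a b hP
    refine ⟨hPrtg a b hP, ?_⟩
    rintro rfl
    exact hS1 a (hS2 _ _ (hPprec a a hP))
  · rintro a b c ⟨hab, -⟩ ⟨hbc, -⟩ hac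
    exact ⟨hab.trans hbc, hac⟩
  · rintro a b c (⟨⟨hab, -⟩, y, ⟨x, hbx, hxy⟩, hyc⟩ | ⟨⟨y, ⟨x, hax, hxy⟩, hyb⟩, ⟨hbc, -⟩⟩)
    · exact ⟨y, ⟨x, hab.trans hbx, hxy⟩, hyc⟩
    · exact ⟨y, ⟨x, hax, hxy⟩, hyb.trans hbc⟩
  · rintro a b ⟨hab, hne⟩
    rcases hL a b hab with rfl | hw
    · exact absurd rfl hne
    · exact hw
end

section
/- Let (X,≺,⊏) be a stratified order structure satisfying the Szpilrajn-type property, and let ≡_⊏ be the ⊏-cycle equivalence (α ≡_⊏ β iff α = β or α ⊏ β ⊏ α). Then for all α, β ∈ X: [α] = [β] (i.e., α ≡_⊏ β) if and only if every stratified extension ◁ of S makes α and β incomparable (α ≃_◁ β). -/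
def IsStratifiedOrder {X : Type*} (lt : X → X → Prop) : Prop :=
  (∀ a, ¬ lt a a) ∧ (∀ a b c, lt a b → lt b c → lt a c) ∧
    Equivalence (fun a b => ¬ lt a b ∧ ¬ lt b a)

def frownCl {X : Type*} (lt : X → X → Prop) (a b : X) : Prop :=
  lt a b ∨ ((¬ lt a b ∧ ¬ lt b a) ∧ a ≠ b)

def InExt {X : Type*} (prec wk lt : X → X → Prop) : Prop :=
  IsStratifiedOrder lt ∧ (∀ a b, prec a b → lt a b) ∧ (∀ a b, wk a b → frownCl lt a b)

/-- `[α] = [β]` (⊏-cycle equivalence) iff `α` and `β` are incomparable in every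
stratified extension. -/
theorem cycle_class_iff_always_incomparable {X : Type*} (prec wk : X → X → Prop)
    (hS1 : ∀ a, ¬ wk a a) (hS2 : ∀ a b, prec a b → wk a b)
    (hS3 : ∀ a b c, wk a b → wk b c → a ≠ c → wk a c)
    (hS4 : ∀ a b c, (wk a b ∧ prec b c) ∨ (prec a b ∧ wk b c) → prec a c)
    (hszpprec : ∀ a b, prec a b ↔ ∀ lt, InExt prec wk lt → lt a b)
    (hszpwk : ∀ a b, wk a b ↔ ∀ lt, InExt prec wk lt → frownCl lt a b) :
    ∀ a b, (a = b ∨ (wk a b ∧ wk b a)) ↔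
      (∀ lt, InExt prec wk lt → ¬ lt a b ∧ ¬ lt b a) := by
  intro a b
  constructor
  · rintro (rfl | ⟨hab, hba⟩)
    · intro lt hlt
      exact ⟨hlt.1.1 a, hlt.1.1 a⟩
    · intro lt hlt
      have f1 := hlt.2.2 a b hab
      have f2 := hlt.2.2 b a hba
      constructor
      · intro h
        rcases f2 with h2 | ⟨⟨_, h2⟩, _⟩
        · exact hlt.1.1 a (hlt.1.2.1 a b a h h2)
        · exact h2 h
      · intro h
        rcases f1 with h1 | ⟨⟨_, h1⟩, _⟩
        · exact hlt.1.1 a (hlt.1.2.1 a b a h1 h)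
        · exact h1 h
  · intro h
    by_cases hab : a = b
    · exact Or.inl hab
    · refine Or.inr ⟨(hszpwk a b).2 ?_, (hszpwk b a).2 ?_⟩
      · intro lt hlt
        exact Or.inr ⟨h lt hlt, hab⟩
      · intro lt hlt
        exact Or.inr ⟨⟨(h lt hlt).2, (h lt hlt).1⟩, Ne.symm hab⟩
end
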